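/- Let X and Y be states of graphs G and H respectively, and let a_f be the map on arrows induced by a graph isomorphism f : U(X) → U(Y). If f(h(X) ∪ L(G)) = h(Y) ∪ L(H) and f(t(X) ∪ L(G)) = t(Y) ∪ L(H), then a_f is a state isomorphism from X to Y. -/

import Mathlib

/-- A decoration of a graph `G`: a set of arrows drawn on edges of `G`,
at most one per edge. -/
def IsDecoration {V : Type*} (G : SimpleGraph V) (X : Set (V × V)) : Prop :=
  (∀ p ∈ X, G.Adj p.1 p.2) ∧ (∀ p ∈ X, Prod.swap p ∉ X)

/-- `w` is a sink of the decoration `X`. -/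
def IsSink {V : Type*} (G : SimpleGraph V) (X : Set (V × V)) (w : V) : Prop :=
  ∀ v, G.Adj v w → (v, w) ∈ X

/-- `v` is a source of the decoration `X`. -/
def IsSource {V : Type*} (G : SimpleGraph V) (X : Set (V × V)) (v : V) : Prop :=
  ∀ w, G.Adj v w → (v, w) ∈ X

/-- A leaf is a vertex of degree one. -/
def IsLeaf {V : Type*} (G : SimpleGraph V) (v : V) : Prop :=
  ∃! w, G.Adj v w

/-- A state: a decoration with no sinks or sources at internal (non-leaf) vertices. -/
def IsState {V : Type*} (G : SimpleGraph V) (X : Set (V × V)) : Prop :=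
  IsDecoration G X ∧ ∀ v, ¬ IsLeaf G v → ¬ IsSink G X v ∧ ¬ IsSource G X v

/-- `X'` is a follower of the state `X`: a state obtained from `X` by adding one arrow. -/
def Follower {V : Type*} (G : SimpleGraph V) (X X' : Set (V × V)) : Prop :=
  IsState G X ∧ IsState G X' ∧ ∃ p, p ∉ X ∧ X' = insert p X

/-- `X'` is a descendent of `X`: obtained from `X` by one or more follower steps. -/
def Descendent {V : Type*} (G : SimpleGraph V) (X X' : Set (V × V)) : Prop :=
  Relation.TransGen (Follower G) X X'

/-- `p` is an arrow of the subgraph `U(X)` of `G` induced by the edges unmarked in `X`. -/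
def UnmarkedArrow {V : Type*} (G : SimpleGraph V) (X : Set (V × V)) (p : V × V) : Prop :=
  G.Adj p.1 p.2 ∧ p ∉ X ∧ Prod.swap p ∉ X

/-- `v` is a vertex of the subgraph `U(X)` of `G` induced by the unmarked edges of `X`. -/
def UnmarkedVert {V : Type*} (G : SimpleGraph V) (X : Set (V × V)) (v : V) : Prop :=
  ∃ w, UnmarkedArrow G X (v, w)

/-- The map `a⁺` on decorations containing `X` induced by the arrow map `a`:
`a⁺(X*) = Y ∪ a(X* \ X)`. -/
def aPlus {V W : Type*} (a : V × V → W × W) (X : Set (V × V)) (Y : Set (W × W))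
    (X' : Set (V × V)) : Set (W × W) :=
  Y ∪ a '' (X' \ X)

/-- A state isomorphism from a state `X` of `G` to a state `Y` of `H`: a bijection `a`
from the arrows of `U(X)` to the arrows of `U(Y)` commuting with the flip operation,
such that the induced map `a⁺` on decorations restricts to a bijection from the
descendents of `X` to the descendents of `Y`. -/
def IsStateIso {V W : Type*} (G : SimpleGraph V) (H : SimpleGraph W)
    (X : Set (V × V)) (Y : Set (W × W)) (a : V × V → W × W) : Prop :=
  Set.BijOn a {p | UnmarkedArrow G X p} {q | UnmarkedArrow H Y q} ∧
  (∀ p, UnmarkedArrow G X p → a (Prod.swap p) = Prod.swap (a p)) ∧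
  Set.BijOn (aPlus a X Y) {X' | Descendent G X X'} {Y' | Descendent H Y Y'}

/-- The set of heads of `X`: vertices into which some arrow of `X` points. -/
def headSet {V : Type*} (X : Set (V × V)) : Set V :=
  {v | ∃ w, (w, v) ∈ X}

/-- The set of tails of `X`: vertices out of which some arrow of `X` points. -/
def tailSet {V : Type*} (X : Set (V × V)) : Set V :=
  {v | ∃ w, (v, w) ∈ X}

/-- The set of leaves of `G`. -/
def leafSet {V : Type*} (G : SimpleGraph V) : Set V :=
  {v | IsLeaf G v}

/-- The vertex set of the subgraph `U(X)` induced by the unmarked edges. -/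
def unmarkedVertSet {V : Type*} (G : SimpleGraph V) (X : Set (V × V)) : Set V :=
  {v | UnmarkedVert G X v}

section AuxLemmas

lemma StateAux.unmarked_swap {V : Type*} {G : SimpleGraph V} {X : Set (V × V)} {p : V × V}
    (h : UnmarkedArrow G X p) : UnmarkedArrow G X (Prod.swap p) :=
  ⟨h.1.symm, h.2.2, by rw [Prod.swap_swap]; exact h.2.1⟩

lemma StateAux.vert_fst {V : Type*} {G : SimpleGraph V} {X : Set (V × V)} {p : V × V}
    (h : UnmarkedArrow G X p) : UnmarkedVert G X p.1 :=
  ⟨p.2, by rwa [Prod.mk.eta]⟩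

lemma StateAux.vert_snd {V : Type*} {G : SimpleGraph V} {X : Set (V × V)} {p : V × V}
    (h : UnmarkedArrow G X p) : UnmarkedVert G X p.2 :=
  ⟨p.1, StateAux.unmarked_swap h⟩

lemma StateAux.descendent_of_state {V : Type*} [Fintype V] (G : SimpleGraph V)
    (X : Set (V × V)) (hX : IsState G X) :
    ∀ n (X' : Set (V × V)), (X' \ X).ncard = n → IsState G X' → X ⊂ X' →
      Descendent G X X' := by
  intro n
  induction n with
  | zero =>
    intro X' hcard hX' hss
    exfalso
    have h0 : X' \ X = ∅ := (Set.ncard_eq_zero (Set.toFinite _)).mp hcard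
    exact hss.not_subset (Set.diff_eq_empty.mp h0)
  | succ n ih =>
    intro X' hcard hX' hss
    have hne : (X' \ X).Nonempty := (Set.ncard_pos (Set.toFinite _)).mp (by omega)
    obtain ⟨p, hp⟩ := hne
    have hpX' : p ∈ X' := hp.1
    have hpX : p ∉ X := hp.2
    set X'' := X' \ {p} with hX''def
    have hXsub : X ⊆ X'' := fun q hq =>
      ⟨hss.subset hq, by simp only [Set.mem_singleton_iff]; rintro rfl; exact hpX hq⟩
    have hX''state : IsState G X'' := by
      refine ⟨⟨fun q hq => hX'.1.1 q hq.1, fun q hq hc => hX'.1.2 q hq.1 hc.1⟩, ?_⟩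
      intro v hv
      exact ⟨fun hs => (hX'.2 v hv).1 (fun w hw => (hs w hw).1),
             fun hs => (hX'.2 v hv).2 (fun w hw => (hs w hw).1)⟩
    have hfoll : Follower G X'' X' := by
      refine ⟨hX''state, hX', p, ?_, ?_⟩
      · simp [hX''def]
      · rw [hX''def, Set.insert_diff_singleton, Set.insert_eq_self.mpr hpX']
    rcases eq_or_lt_of_le hXsub with heq | hlt
    · exact Relation.TransGen.single (heq ▸ hfoll)
    · have hdiff : X'' \ X = (X' \ X) \ {p} := by
        rw [hX''def]; ext q; simp only [Set.mem_diff, Set.mem_singleton_iff]; tauto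
      have hcard' : (X'' \ X).ncard = n := by
        rw [hdiff, Set.ncard_diff_singleton_of_mem hp, hcard]
        omega
      exact (ih X'' hcard' hX''state hlt).tail hfoll

lemma StateAux.descendent_iff {V : Type*} [Fintype V] (G : SimpleGraph V)
    {X : Set (V × V)} (hX : IsState G X) (X' : Set (V × V)) :
    Descendent G X X' ↔ IsState G X' ∧ X ⊂ X' := by
  constructor
  · intro h
    induction h with
    | single h =>
      obtain ⟨_, h2, p, hp, rfl⟩ := h
      exact ⟨h2, Set.ssubset_insert hp⟩
    | tail _ h2 ih =>
      obtain ⟨_, hstate, p, hp, rfl⟩ := h2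
      exact ⟨hstate, lt_of_lt_of_le ih.2 (Set.subset_insert _ _)⟩
  · rintro ⟨h1, h2⟩
    exact StateAux.descendent_of_state G X hX _ X' rfl h1 h2

lemma StateAux.charSink {V : Type*} {G : SimpleGraph V} {X S : Set (V × V)}
    (hX : IsDecoration G X) (hS : S ⊆ {p | UnmarkedArrow G X p}) (u : V) :
    IsSink G (X ∪ S) u ↔
      (u ∉ tailSet X ∧ ∀ v, UnmarkedArrow G X (v, u) → (v, u) ∈ S) := by
  constructor
  · intro hs
    refine ⟨?_, ?_⟩
    · rintro ⟨w, hw⟩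
      have hadj : G.Adj w u := (hX.1 _ hw).symm
      rcases hs w hadj with h | h
      · exact hX.2 _ hw h
      · exact (hS h).2.2 hw
    · intro v hv
      rcases hs v hv.1 with h | h
      · exact absurd h hv.2.1
      · exact h
  · rintro ⟨ht, hall⟩ v hadj
    by_cases h1 : (v, u) ∈ X
    · exact Or.inl h1
    · by_cases h2 : (u, v) ∈ X
      · exact absurd ⟨v, h2⟩ ht
      · exact Or.inr (hall v ⟨hadj, h1, h2⟩)

lemma StateAux.charSource {V : Type*} {G : SimpleGraph V} {X S : Set (V × V)}
    (hX : IsDecoration G X) (hS : S ⊆ {p | UnmarkedArrow G X p}) (u : V) :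
    IsSource G (X ∪ S) u ↔
      (u ∉ headSet X ∧ ∀ v, UnmarkedArrow G X (u, v) → (u, v) ∈ S) := by
  constructor
  · intro hs
    refine ⟨?_, ?_⟩
    · rintro ⟨w, hw⟩
      have hadj : G.Adj u w := (hX.1 _ hw).symm
      rcases hs w hadj with h | h
      · exact hX.2 _ hw h
      · exact (hS h).2.2 hw
    · intro v hv
      rcases hs v hv.1 with h | h
      · exact absurd h hv.2.1
      · exact h
  · rintro ⟨ht, hall⟩ v hadj
    by_cases h1 : (u, v) ∈ X
    · exact Or.inl h1
    · by_cases h2 : (v, u) ∈ X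
      · exact absurd ⟨v, h2⟩ ht
      · exact Or.inr (hall v ⟨hadj, h1, h2⟩)

lemma StateAux.noSinkOutside {V : Type*} {G : SimpleGraph V} {X S : Set (V × V)}
    (hX : IsState G X) (hS : S ⊆ {p | UnmarkedArrow G X p}) (u : V)
    (hu : u ∉ unmarkedVertSet G X) (hleaf : ¬ IsLeaf G u) :
    ¬ IsSink G (X ∪ S) u := by
  intro hs
  have hnot : ¬ IsSink G X u := (hX.2 u hleaf).1
  rw [IsSink] at hnot
  push_neg at hnot
  obtain ⟨v, hadj, hvu⟩ := hnot
  rcases hs v hadj with h | h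
  · exact hvu h
  · exact hu (StateAux.vert_snd (hS h))

lemma StateAux.noSourceOutside {V : Type*} {G : SimpleGraph V} {X S : Set (V × V)}
    (hX : IsState G X) (hS : S ⊆ {p | UnmarkedArrow G X p}) (u : V)
    (hu : u ∉ unmarkedVertSet G X) (hleaf : ¬ IsLeaf G u) :
    ¬ IsSource G (X ∪ S) u := by
  intro hs
  have hnot : ¬ IsSource G X u := (hX.2 u hleaf).2
  rw [IsSource] at hnot
  push_neg at hnot
  obtain ⟨v, hadj, hvu⟩ := hnot
  rcases hs v hadj with h | h
  · exact hvu h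
  · exact hu (StateAux.vert_fst (hS h))

lemma StateAux.unionDecoration {V : Type*} {G : SimpleGraph V} {X S : Set (V × V)}
    (hX : IsDecoration G X) (hS : S ⊆ {p | UnmarkedArrow G X p})
    (hSswap : ∀ p ∈ S, Prod.swap p ∉ S) : IsDecoration G (X ∪ S) := by
  constructor
  · rintro p (hp | hp)
    · exact hX.1 p hp
    · exact (hS hp).1
  · rintro p (hp | hp) (hc | hc)
    · exact hX.2 p hp hc
    · exact absurd hp (by simpa using (hS hc).2.2)
    · exact (hS hp).2.2 hc
    · exact hSswap p hp hc

lemma StateAux.diff_unmarked {V : Type*} {G : SimpleGraph V} {X X' : Set (V × V)}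
    (hX' : IsState G X') (hsub : X ⊆ X') :
    (X' \ X) ⊆ {p | UnmarkedArrow G X p} := by
  rintro p ⟨hp1, hp2⟩
  exact ⟨hX'.1.1 p hp1, hp2, fun hc => hX'.1.2 p hp1 (hsub hc)⟩

lemma StateAux.diff_swapfree {V : Type*} {G : SimpleGraph V} {X X' : Set (V × V)}
    (hX' : IsState G X') :
    ∀ p ∈ X' \ X, Prod.swap p ∉ X' \ X :=
  fun p hp hc => hX'.1.2 p hp.1 hc.1

end AuxLemmas

/-- Sufficient criterion for a state isomorphism.  Let `X` and `Y` be states of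
graphs `G` and `H`, and let `f` be a graph isomorphism from `U(X)` to `U(Y)`
(a bijection on their vertex sets preserving the unmarked-adjacency relation in
both directions).  If `f(h(X) ∪ L(G)) = h(Y) ∪ L(H)` and
`f(t(X) ∪ L(G)) = t(Y) ∪ L(H)` (within the vertex sets of `U(X)` and `U(Y)`,
where `f` is defined), then the induced arrow map `a_f : (v,w) ↦ (f v, f w)`
is a state isomorphism from `X` to `Y`. -/
theorem isStateIso_of_image_heads_tails {V W : Type*} [Fintype V] [Fintype W]
    (G : SimpleGraph V) (H : SimpleGraph W)
    (hG : ∀ v, ∃ w, G.Adj v w) (hH : ∀ v, ∃ w, H.Adj v w)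
    (X : Set (V × V)) (Y : Set (W × W)) (hX : IsState G X) (hY : IsState H Y)
    (f : V → W)
    (hfbij : Set.BijOn f (unmarkedVertSet G X) (unmarkedVertSet H Y))
    (hfadj : ∀ v w, UnmarkedVert G X v → UnmarkedVert G X w →
      (UnmarkedArrow G X (v, w) ↔ UnmarkedArrow H Y (f v, f w)))
    (hheads : f '' ((headSet X ∪ leafSet G) ∩ unmarkedVertSet G X) =
      (headSet Y ∪ leafSet H) ∩ unmarkedVertSet H Y)
    (htails : f '' ((tailSet X ∪ leafSet G) ∩ unmarkedVertSet G X) =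
      (tailSet Y ∪ leafSet H) ∩ unmarkedVertSet H Y) :
    IsStateIso G H X Y (fun p => (f p.1, f p.2)) := by
  classical
  set a : V × V → W × W := fun p => (f p.1, f p.2) with ha
  have hfinj := hfbij.injOn
  have hfmaps := hfbij.mapsTo
  have haUA : ∀ p, UnmarkedArrow G X p → UnmarkedArrow H Y (a p) := by
    intro p hp
    exact (hfadj p.1 p.2 (StateAux.vert_fst hp) (StateAux.vert_snd hp)).mp
      (by rwa [Prod.mk.eta])
  have part1 : Set.BijOn a {p | UnmarkedArrow G X p} {q | UnmarkedArrow H Y q} := by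
    refine ⟨fun p hp => haUA p hp, ?_, ?_⟩
    · intro p hp q hq heq
      have h1 : f p.1 = f q.1 := congrArg Prod.fst heq
      have h2 : f p.2 = f q.2 := congrArg Prod.snd heq
      have e1 := hfinj (StateAux.vert_fst hp) (StateAux.vert_fst hq) h1
      have e2 := hfinj (StateAux.vert_snd hp) (StateAux.vert_snd hq) h2
      exact Prod.ext e1 e2
    · intro q hq
      obtain ⟨v, hv, hv'⟩ := hfbij.surjOn
        (show q.1 ∈ unmarkedVertSet H Y from StateAux.vert_fst hq)
      obtain ⟨w, hw, hw'⟩ := hfbij.surjOn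
        (show q.2 ∈ unmarkedVertSet H Y from StateAux.vert_snd hq)
      refine ⟨(v, w), ?_, ?_⟩
      · show UnmarkedArrow G X (v, w)
        apply (hfadj v w hv hw).mpr
        rw [hv', hw', Prod.mk.eta]
        exact hq
      · show (f v, f w) = q
        rw [hv', hw', Prod.mk.eta]
  have TdisjY : ∀ {S : Set (V × V)}, S ⊆ {p | UnmarkedArrow G X p} →
      ∀ q ∈ a '' S, q ∉ Y := by
    rintro S hSs q ⟨p, hp, rfl⟩
    exact (haUA p (hSs hp)).2.1
  have tailtrans : ∀ u, u ∈ unmarkedVertSet G X →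
      ((u ∉ tailSet X ∧ ¬ IsLeaf G u) ↔ (f u ∉ tailSet Y ∧ ¬ IsLeaf H (f u))) := by
    intro u hu
    have hu' : f u ∈ unmarkedVertSet H Y := hfmaps hu
    have h1 : u ∈ (tailSet X ∪ leafSet G) ∩ unmarkedVertSet G X ↔
        f u ∈ (tailSet Y ∪ leafSet H) ∩ unmarkedVertSet H Y := by
      rw [← htails]
      exact (hfinj.mem_image_iff Set.inter_subset_right hu).symm
    simp only [Set.mem_inter_iff, Set.mem_union, hu, hu', and_true] at h1
    constructor
    · rintro ⟨h2, h3⟩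
      have h4 : ¬ (f u ∈ tailSet Y ∨ f u ∈ leafSet H) := by
        rw [← h1]; rintro (h | h); exacts [h2 h, h3 h]
      push_neg at h4
      exact ⟨h4.1, h4.2⟩
    · rintro ⟨h2, h3⟩
      have h4 : ¬ (u ∈ tailSet X ∨ u ∈ leafSet G) := by
        rw [h1]; rintro (h | h); exacts [h2 h, h3 h]
      push_neg at h4
      exact ⟨h4.1, h4.2⟩
  have headtrans : ∀ u, u ∈ unmarkedVertSet G X →
      ((u ∉ headSet X ∧ ¬ IsLeaf G u) ↔ (f u ∉ headSet Y ∧ ¬ IsLeaf H (f u))) := by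
    intro u hu
    have hu' : f u ∈ unmarkedVertSet H Y := hfmaps hu
    have h1 : u ∈ (headSet X ∪ leafSet G) ∩ unmarkedVertSet G X ↔
        f u ∈ (headSet Y ∪ leafSet H) ∩ unmarkedVertSet H Y := by
      rw [← hheads]
      exact (hfinj.mem_image_iff Set.inter_subset_right hu).symm
    simp only [Set.mem_inter_iff, Set.mem_union, hu, hu', and_true] at h1
    constructor
    · rintro ⟨h2, h3⟩
      have h4 : ¬ (f u ∈ headSet Y ∨ f u ∈ leafSet H) := by
        rw [← h1]; rintro (h | h); exacts [h2 h, h3 h]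
      push_neg at h4
      exact ⟨h4.1, h4.2⟩
    · rintro ⟨h2, h3⟩
      have h4 : ¬ (u ∈ headSet X ∨ u ∈ leafSet G) := by
        rw [h1]; rintro (h | h); exacts [h2 h, h3 h]
      push_neg at h4
      exact ⟨h4.1, h4.2⟩
  have key : ∀ S : Set (V × V), S ⊆ {p | UnmarkedArrow G X p} →
      (∀ p ∈ S, Prod.swap p ∉ S) →
      (IsState G (X ∪ S) ↔ IsState H (Y ∪ a '' S)) := by
    intro S hSsub hSswap
    have hTsub : a '' S ⊆ {q | UnmarkedArrow H Y q} := by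
      rintro q ⟨p, hp, rfl⟩; exact haUA p (hSsub hp)
    have memT : ∀ v u, u ∈ unmarkedVertSet G X → v ∈ unmarkedVertSet G X →
        ((v, u) ∈ S ↔ (f v, f u) ∈ a '' S) := by
      intro v u hu hv
      constructor
      · intro h; exact ⟨(v, u), h, rfl⟩
      · rintro ⟨p, hp, heq⟩
        have hpu := hSsub hp
        have e1 := hfinj (StateAux.vert_fst hpu) hv (congrArg Prod.fst heq)
        have e2 := hfinj (StateAux.vert_snd hpu) hu (congrArg Prod.snd heq)
        rwa [← Prod.mk.eta (p := p), e1, e2] at hp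
    have hTswap : ∀ q ∈ a '' S, Prod.swap q ∉ a '' S := by
      rintro q ⟨p, hp, rfl⟩ ⟨p', hp', heq⟩
      have hpp : p' = Prod.swap p :=
        part1.injOn (hSsub hp') (StateAux.unmarked_swap (hSsub hp)) heq
      exact hSswap p hp (hpp ▸ hp')
    have decX : IsDecoration G (X ∪ S) := StateAux.unionDecoration hX.1 hSsub hSswap
    have decY : IsDecoration H (Y ∪ a '' S) := StateAux.unionDecoration hY.1 hTsub hTswap
    have allSink : ∀ u, u ∈ unmarkedVertSet G X →
        ((∀ v, UnmarkedArrow G X (v, u) → (v, u) ∈ S) ↔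
         (∀ w, UnmarkedArrow H Y (w, f u) → (w, f u) ∈ a '' S)) := by
      intro u hu
      constructor
      · intro hall w hw
        obtain ⟨v, hv, rfl⟩ := hfbij.surjOn
          (show w ∈ unmarkedVertSet H Y from StateAux.vert_fst hw)
        have h1 : UnmarkedArrow G X (v, u) := (hfadj v u hv hu).mpr hw
        exact (memT v u hu hv).mp (hall v h1)
      · intro hall v hv
        have hv1 : v ∈ unmarkedVertSet G X := StateAux.vert_fst hv
        have h1 : UnmarkedArrow H Y (f v, f u) := (hfadj v u hv1 hu).mp hv
        exact (memT v u hu hv1).mpr (hall _ h1)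
    have allSource : ∀ u, u ∈ unmarkedVertSet G X →
        ((∀ v, UnmarkedArrow G X (u, v) → (u, v) ∈ S) ↔
         (∀ w, UnmarkedArrow H Y (f u, w) → (f u, w) ∈ a '' S)) := by
      intro u hu
      constructor
      · intro hall w hw
        obtain ⟨v, hv, rfl⟩ := hfbij.surjOn
          (show w ∈ unmarkedVertSet H Y from StateAux.vert_snd hw)
        have h1 : UnmarkedArrow G X (u, v) := (hfadj u v hu hv).mpr hw
        exact (memT u v hv hu).mp (hall v h1)
      · intro hall v hv
        have hv1 : v ∈ unmarkedVertSet G X := StateAux.vert_snd hv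
        have h1 : UnmarkedArrow H Y (f u, f v) := (hfadj u v hu hv1).mp hv
        exact (memT u v hv1 hu).mpr (hall _ h1)
    have sinktrans : ∀ u, u ∈ unmarkedVertSet G X →
        ((¬ IsLeaf G u ∧ IsSink G (X ∪ S) u) ↔
         (¬ IsLeaf H (f u) ∧ IsSink H (Y ∪ a '' S) (f u))) := by
      intro u hu
      rw [StateAux.charSink hX.1 hSsub u, StateAux.charSink hY.1 hTsub (f u)]
      constructor
      · rintro ⟨hl, ht, hall⟩
        obtain ⟨ht', hl'⟩ := (tailtrans u hu).mp ⟨ht, hl⟩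
        exact ⟨hl', ht', (allSink u hu).mp hall⟩
      · rintro ⟨hl, ht, hall⟩
        obtain ⟨ht', hl'⟩ := (tailtrans u hu).mpr ⟨ht, hl⟩
        exact ⟨hl', ht', (allSink u hu).mpr hall⟩
    have sourcetrans : ∀ u, u ∈ unmarkedVertSet G X →
        ((¬ IsLeaf G u ∧ IsSource G (X ∪ S) u) ↔
         (¬ IsLeaf H (f u) ∧ IsSource H (Y ∪ a '' S) (f u))) := by
      intro u hu
      rw [StateAux.charSource hX.1 hSsub u, StateAux.charSource hY.1 hTsub (f u)]
      constructor
      · rintro ⟨hl, ht, hall⟩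
        obtain ⟨ht', hl'⟩ := (headtrans u hu).mp ⟨ht, hl⟩
        exact ⟨hl', ht', (allSource u hu).mp hall⟩
      · rintro ⟨hl, ht, hall⟩
        obtain ⟨ht', hl'⟩ := (headtrans u hu).mpr ⟨ht, hl⟩
        exact ⟨hl', ht', (allSource u hu).mpr hall⟩
    constructor
    · intro hst
      refine ⟨decY, ?_⟩
      intro w hwleaf
      by_cases hw : w ∈ unmarkedVertSet H Y
      · obtain ⟨u, hu, rfl⟩ := hfbij.surjOn hw
        constructor
        · intro hs
          obtain ⟨hl, hsG⟩ := (sinktrans u hu).mpr ⟨hwleaf, hs⟩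
          exact (hst.2 u hl).1 hsG
        · intro hs
          obtain ⟨hl, hsG⟩ := (sourcetrans u hu).mpr ⟨hwleaf, hs⟩
          exact (hst.2 u hl).2 hsG
      · exact ⟨StateAux.noSinkOutside hY hTsub w hw hwleaf,
               StateAux.noSourceOutside hY hTsub w hw hwleaf⟩
    · intro hst
      refine ⟨decX, ?_⟩
      intro u huleaf
      by_cases hu : u ∈ unmarkedVertSet G X
      · constructor
        · intro hs
          obtain ⟨hl, hsH⟩ := (sinktrans u hu).mp ⟨huleaf, hs⟩
          exact (hst.2 (f u) hl).1 hsH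
        · intro hs
          obtain ⟨hl, hsH⟩ := (sourcetrans u hu).mp ⟨huleaf, hs⟩
          exact (hst.2 (f u) hl).2 hsH
      · exact ⟨StateAux.noSinkOutside hX hSsub u hu huleaf,
               StateAux.noSourceOutside hX hSsub u hu huleaf⟩
  have descG := fun X' => StateAux.descendent_iff G hX X'
  have descH := fun Y' => StateAux.descendent_iff H hY Y'
  have part3 : Set.BijOn (aPlus a X Y) {X' | Descendent G X X'} {Y' | Descendent H Y Y'} := by
    refine ⟨?_, ?_, ?_⟩
    · intro X' hX'
      obtain ⟨hst, hss⟩ := (descG X').mp hX'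
      have hSsub := StateAux.diff_unmarked hst hss.subset
      have hSswap := StateAux.diff_swapfree (X := X) hst
      have hXS : X ∪ (X' \ X) = X' := Set.union_diff_cancel hss.subset
      have hTstate : IsState H (Y ∪ a '' (X' \ X)) := by
        apply (key _ hSsub hSswap).mp
        rw [hXS]; exact hst
      refine (descH _).mpr ⟨hTstate, ?_⟩
      refine (Set.ssubset_iff_of_subset Set.subset_union_left).mpr ?_
      obtain ⟨p, hp1, hp2⟩ := Set.exists_of_ssubset hss
      refine ⟨a p, Set.mem_union_right _ ⟨p, ⟨hp1, hp2⟩, rfl⟩, ?_⟩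
      exact TdisjY hSsub (a p) ⟨p, ⟨hp1, hp2⟩, rfl⟩
    · intro X1 h1 X2 h2 heq
      obtain ⟨hst1, hss1⟩ := (descG X1).mp h1
      obtain ⟨hst2, hss2⟩ := (descG X2).mp h2
      have hSsub1 := StateAux.diff_unmarked hst1 hss1.subset
      have hSsub2 := StateAux.diff_unmarked hst2 hss2.subset
      have e : Y ∪ a '' (X1 \ X) = Y ∪ a '' (X2 \ X) := heq
      have hT1 : a '' (X1 \ X) = a '' (X2 \ X) := by
        ext q
        constructor
        · intro hq
          have hq2 : q ∈ Y ∪ a '' (X2 \ X) := by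
            rw [← e]; exact Set.mem_union_right _ hq
          rcases hq2 with h | h
          · exact absurd h (TdisjY hSsub1 q hq)
          · exact h
        · intro hq
          have hq2 : q ∈ Y ∪ a '' (X1 \ X) := by
            rw [e]; exact Set.mem_union_right _ hq
          rcases hq2 with h | h
          · exact absurd h (TdisjY hSsub2 q hq)
          · exact h
      have hS12 : X1 \ X = X2 \ X :=
        (Set.InjOn.image_eq_image_iff part1.injOn hSsub1 hSsub2).mp hT1
      calc X1 = X ∪ (X1 \ X) := (Set.union_diff_cancel hss1.subset).symm
        _ = X ∪ (X2 \ X) := by rw [hS12]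
        _ = X2 := Set.union_diff_cancel hss2.subset
    · intro Y' hY'
      obtain ⟨hst, hss⟩ := (descH Y').mp hY'
      have hTsub := StateAux.diff_unmarked hst hss.subset
      have hTswap := StateAux.diff_swapfree (X := Y) hst
      set S : Set (V × V) := {p | UnmarkedArrow G X p ∧ a p ∈ Y' \ Y} with hSdef
      have hSsub : S ⊆ {p | UnmarkedArrow G X p} := fun p hp => hp.1
      have haS : a '' S = Y' \ Y := by
        apply Set.Subset.antisymm
        · rintro q ⟨p, hp, rfl⟩; exact hp.2
        · intro q hq
          obtain ⟨p, hp, rfl⟩ := part1.surjOn (hTsub hq)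
          exact ⟨p, ⟨hp, hq⟩, rfl⟩
      have hSswap : ∀ p ∈ S, Prod.swap p ∉ S := fun p hp hc =>
        hTswap (a p) hp.2 hc.2
      have hXS : IsState G (X ∪ S) := by
        apply (key S hSsub hSswap).mpr
        rw [haS, Set.union_diff_cancel hss.subset]
        exact hst
      have hSne : S.Nonempty := by
        obtain ⟨q, hq1, hq2⟩ := Set.exists_of_ssubset hss
        obtain ⟨p, hp, rfl⟩ := part1.surjOn (hTsub ⟨hq1, hq2⟩)
        exact ⟨p, hp, ⟨hq1, hq2⟩⟩
      refine ⟨X ∪ S, ?_, ?_⟩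
      · refine (descG _).mpr ⟨hXS, ?_⟩
        refine (Set.ssubset_iff_of_subset Set.subset_union_left).mpr ?_
        obtain ⟨p, hp⟩ := hSne
        exact ⟨p, Set.mem_union_right _ hp, hp.1.2.1⟩
      · show Y ∪ a '' ((X ∪ S) \ X) = Y'
        have hdiff : (X ∪ S) \ X = S := by
          rw [Set.union_diff_left]
          ext p
          simp only [Set.mem_diff]
          exact ⟨fun h => h.1, fun h => ⟨h, h.1.2.1⟩⟩
        rw [hdiff, haS, Set.union_diff_cancel hss.subset]
  exact ⟨part1, fun p hp => rfl, part3⟩
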